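/- arXiv:1303.0014 — 3 statements merged into one kernel-verified Lean document; each statement's English description precedes it below -/
import Mathlib

section
/- Let D ⊂ ℂⁿ be a convex tube domain. Then there exist k ∈ {0,…,n}, a convex tube domain G ⊂ Hᵏ (where H = {w ∈ ℂ : Re w < 0}), and a complex affine isomorphism Φ of ℂⁿ with Φ(ℝⁿ) = ℝⁿ such that Φ(D) = G × ℂ^{n−k}. Moreover, a holomorphic map φ : 𝔻 → D is a complex geodesic for D if and only if (Φ₁,…,Φ_k) ∘ φ is a complex geodesic for G. -/
open MeasureTheory Complex Metric Set Filter ComplexConjugate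

noncomputable section

instance : Fact (0 < 2 * Real.pi) := ⟨by positivity⟩

/-- The parametrization `AddCircle (2π) → 𝕋 ⊂ ℂ`, `θ ↦ exp(iθ)`. -/
noncomputable def tCoe : AddCircle (2 * Real.pi) → ℂ :=
  (periodic_circleMap 0 1).lift

/-- Integral of a complex-valued function against a (finite real) signed measure. -/
noncomputable def sIntC {X : Type*} [MeasurableSpace X] (ν : MeasureTheory.SignedMeasure X)
    (f : X → ℂ) : ℂ :=
  (∫ x, f x ∂ν.toJordanDecomposition.posPart) - ∫ x, f x ∂ν.toJordanDecomposition.negPart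

/-- Integral of a real-valued function against a (finite real) signed measure. -/
noncomputable def sIntR {X : Type*} [MeasurableSpace X] (ν : MeasureTheory.SignedMeasure X)
    (f : X → ℝ) : ℝ :=
  (∫ x, f x ∂ν.toJordanDecomposition.posPart) - ∫ x, f x ∂ν.toJordanDecomposition.negPart

/-- `μ = (μ₁,…,μₙ)` is the boundary measure of the holomorphic map `φ : 𝔻 → ℂⁿ`, i.e.
`φ_j(λ) = (1/2π) ∫_𝕋 (ζ+λ)/(ζ-λ) dμ_j(ζ) + i Im φ_j(0)` for `λ ∈ 𝔻`. -/
def IsBoundaryMeasure {n : ℕ} (φ : ℂ → Fin n → ℂ)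
    (μ : Fin n → MeasureTheory.SignedMeasure (AddCircle (2 * Real.pi))) : Prop :=
  ∀ j, ∀ lam ∈ ball (0 : ℂ) 1,
    φ lam j = (1 / (2 * Real.pi) : ℂ) *
        sIntC (μ j) (fun θ => (tCoe θ + lam) / (tCoe θ - lam)) + (φ 0 j).im * Complex.I

/-- `φ : 𝔻 → D` is a complex geodesic of `D`: it is holomorphic, maps `𝔻` into `D`, and
admits a holomorphic left inverse `f : D → 𝔻`. -/
def IsComplexGeodesic {E : Type*} [NormedAddCommGroup E] [NormedSpace ℂ E]
    (D : Set E) (φ : ℂ → E) : Prop :=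
  DifferentiableOn ℂ φ (ball 0 1) ∧ MapsTo φ (ball 0 1) D ∧
    ∃ f : E → ℂ, DifferentiableOn ℂ f D ∧ MapsTo f D (ball 0 1) ∧
      ∀ lam ∈ ball (0 : ℂ) 1, f (φ lam) = lam

/-- The vector `λ̄h(λ) = b + 2Re(aλ̄) ∈ ℝⁿ`, for `h(λ) = āλ² + bλ + a` and `λ = tCoe θ ∈ 𝕋`. -/
def hCirc {n : ℕ} (a : Fin n → ℂ) (b : Fin n → ℝ) (θ : AddCircle (2 * Real.pi)) :
    Fin n → ℝ :=
  fun j => b j + 2 * (a j * conj (tCoe θ)).re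

/-- The map `h(λ) = āλ² + bλ + a`. -/
def hPoly {n : ℕ} (a : Fin n → ℂ) (b : Fin n → ℝ) (lam : ℂ) : Fin n → ℂ :=
  fun j => conj (a j) * lam ^ 2 + (b j : ℂ) * lam + a j

/-- For `z ∈ ℂⁿ`, the real measure `λ̄h(λ) • (Re z dL(λ) − dμ(λ))` on `𝕋` is negative:
its value `Σ_j ∫_E (b_j + 2Re(a_jλ̄)) (Re z_j dL − dμ_j)` on every Borel set `E` is `≤ 0`. -/
def NegMeasureCond {n : ℕ} (μ : Fin n → MeasureTheory.SignedMeasure (AddCircle (2 * Real.pi)))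
    (a : Fin n → ℂ) (b : Fin n → ℝ) (z : Fin n → ℂ) : Prop :=
  ∀ E : Set (AddCircle (2 * Real.pi)), MeasurableSet E →
    (∑ j, ((z j).re * (∫ θ in E, hCirc a b θ j) -
      sIntR (μ j) (E.indicator fun θ => hCirc a b θ j))) ≤ 0

/-- Condition (i): for a.e. `λ ∈ 𝕋` the radial limit `φ*(λ)` exists and
`Re[λ̄h(λ) • (z − φ*(λ))] < 0` for all `z ∈ D`. -/
def RadialCond {n : ℕ} (D : Set (Fin n → ℂ)) (φ : ℂ → Fin n → ℂ)
    (a : Fin n → ℂ) (b : Fin n → ℝ) : Prop :=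
  ∀ᵐ θ : AddCircle (2 * Real.pi), ∃ w : Fin n → ℂ,
    Tendsto (fun r : ℝ => φ ((r : ℂ) * tCoe θ)) (nhdsWithin 1 (Iio 1)) (nhds w) ∧
    ∀ z ∈ D, (∑ j, (hCirc a b θ j : ℂ) * (z j - w j)).re < 0

/-- Condition (ii): `Re[h(λ) • (φ(0) − φ(λ))/λ] < 0` for every `λ ∈ 𝔻 ∖ {0}`. -/
def InnerCond {n : ℕ} (φ : ℂ → Fin n → ℂ) (a : Fin n → ℂ) (b : Fin n → ℝ) : Prop :=
  ∀ lam ∈ ball (0 : ℂ) 1 \ {0},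
    (∑ j, hPoly a b lam j * ((φ 0 j - φ lam j) / lam)).re < 0

/-- `D ⊂ ℂⁿ` is the convex tube domain with (convex, open, nonempty) base `Ω ⊂ ℝⁿ`,
i.e. `D = Ω + iℝⁿ`. -/
def IsConvexTube {n : ℕ} (D : Set (Fin n → ℂ)) (Ω : Set (Fin n → ℝ)) : Prop :=
  Convex ℝ Ω ∧ IsOpen Ω ∧ Ω.Nonempty ∧ D = {z | (fun j => (z j).re) ∈ Ω}

/-- The base `Ω` contains no real affine line (equivalently, the tube over `Ω` is taut). -/
def NoLine {n : ℕ} (Ω : Set (Fin n → ℝ)) : Prop :=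
  ∀ x v : Fin n → ℝ, v ≠ 0 → ¬ ∀ t : ℝ, x + t • v ∈ Ω

end

namespace TubeDecompAux

open Module

set_option maxHeartbeats 1000000

variable {n : ℕ}

/-- linear functionals bounded above on Ω -/
def bddFunc (Ω : Set (Fin n → ℝ)) : Set (Module.Dual ℝ (Fin n → ℝ)) :=
  {u | ∃ s : ℝ, ∀ x ∈ Ω, u x ≤ s}

lemma add_mem_of_dual_zero {Ω : Set (Fin n → ℝ)} (hconv : Convex ℝ Ω) (hopen : IsOpen Ω)
    {w : Fin n → ℝ} (hw : ∀ u ∈ bddFunc Ω, u w = 0) {x} (hx : x ∈ Ω) : x + w ∈ Ω := by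
  by_contra hnot
  obtain ⟨f, hf⟩ := geometric_hahn_banach_open_point hconv hopen hnot
  have hfU : (f : (Fin n → ℝ) →ₗ[ℝ] ℝ) ∈ bddFunc Ω :=
    ⟨f (x + w), fun y hy => (hf y hy).le⟩
  have hfw : f w = 0 := hw _ hfU
  have hx' := hf x hx
  rw [map_add, hfw, add_zero] at hx'
  exact lt_irrefl _ hx'

lemma pi_surjective {k : ℕ} (u : Fin k → Module.Dual ℝ (Fin n → ℝ))
    (hind : LinearIndependent ℝ u) : Function.Surjective (LinearMap.pi u) := by
  classical
  rw [← LinearMap.range_eq_top]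
  by_contra hne'
  obtain ⟨y, hy⟩ : ∃ y, y ∉ LinearMap.range (LinearMap.pi u) := by
    by_contra h
    push_neg at h
    exact hne' (Submodule.eq_top_iff'.mpr h)
  obtain ⟨ψ, hψy, hψmap⟩ := Submodule.exists_dual_map_eq_bot_of_notMem hy inferInstance
  have hψp : ∀ x, ψ (LinearMap.pi u x) = 0 := by
    intro x
    have : ψ (LinearMap.pi u x) ∈ Submodule.map ψ (LinearMap.range (LinearMap.pi u)) :=
      Submodule.mem_map_of_mem (LinearMap.mem_range_self _ x)
    rw [hψmap] at this
    simpa using this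
  have hcomb : ∑ i, (ψ fun j => if i = j then 1 else 0) • u i = 0 := by
    apply LinearMap.ext
    intro x
    have h0 := LinearMap.pi_apply_eq_sum_univ ψ (LinearMap.pi u x)
    rw [hψp x] at h0
    simp only [LinearMap.sum_apply, LinearMap.smul_apply, LinearMap.zero_apply]
    have h1 : ∑ i, (ψ fun j => if i = j then 1 else 0) • (u i) x
        = ∑ i, (LinearMap.pi u x) i • ψ fun j => if i = j then 1 else 0 := by
      apply Finset.sum_congr rfl
      intro i _
      simp [LinearMap.pi_apply, smul_eq_mul, mul_comm]
    rw [h1, ← h0]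
  have hg0 := Fintype.linearIndependent_iff.mp hind _ hcomb
  apply hψy
  rw [LinearMap.pi_apply_eq_sum_univ ψ y]
  apply Finset.sum_eq_zero
  intro i _
  rw [hg0 i]
  simp

lemma build_equiv {k : ℕ} (hk : k ≤ n) (u : Fin k → Module.Dual ℝ (Fin n → ℝ))
    (hind : LinearIndependent ℝ u) :
    ∃ L : (Fin n → ℝ) ≃ₗ[ℝ] (Fin n → ℝ), ∀ x (i : Fin k), L x (Fin.castLE hk i) = u i x := by
  classical
  have hp_surj := pi_surjective u hind
  have hker : finrank ℝ (LinearMap.ker (LinearMap.pi u)) = n - k := by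
    have h1 := LinearMap.finrank_range_add_finrank_ker (LinearMap.pi u)
    rw [LinearMap.range_eq_top.mpr hp_surj, finrank_top] at h1
    simp only [Module.finrank_fin_fun] at h1
    omega
  obtain ⟨q0, hcompl⟩ := Submodule.exists_isCompl (LinearMap.ker (LinearMap.pi u))
  set K := LinearMap.ker (LinearMap.pi u) with hK
  let bK : Basis (Fin (n - k)) ℝ K := Module.finBasisOfFinrankEq ℝ _ hker
  let q : (Fin n → ℝ) →ₗ[ℝ] (Fin (n - k) → ℝ) :=
    bK.equivFun.toLinearMap ∘ₗ K.linearProjOfIsCompl q0 hcompl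
  let Lmap : (Fin n → ℝ) →ₗ[ℝ] (Fin n → ℝ) := LinearMap.pi
    (fun j : Fin n => if h : (j : ℕ) < k then u ⟨j, h⟩
      else (LinearMap.proj (⟨(j : ℕ) - k, by omega⟩ : Fin (n - k))) ∘ₗ q)
  have hLmap_lt : ∀ x (j : Fin n) (h : (j : ℕ) < k), Lmap x j = u ⟨j, h⟩ x := by
    intro x j h
    simp only [Lmap, LinearMap.pi_apply, dif_pos h]
  have hLmap_ge : ∀ x (j : Fin n) (h : ¬ (j : ℕ) < k),
      Lmap x j = q x ⟨(j : ℕ) - k, by omega⟩ := by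
    intro x j h
    simp only [Lmap, LinearMap.pi_apply, dif_neg h]
    rfl
  have hLinj : Function.Injective Lmap := by
    rw [injective_iff_map_eq_zero]
    intro x hx
    have hpx : LinearMap.pi u x = 0 := by
      funext i
      have h1 : ((Fin.castLE hk i : Fin n) : ℕ) < k := i.2
      have h3 := hLmap_lt x (Fin.castLE hk i) h1
      rw [congrFun hx (Fin.castLE hk i)] at h3
      exact h3.symm
    have hxker : x ∈ K := hpx
    have hqx : q x = 0 := by
      funext m
      have hm : k + (m : ℕ) < n := by omega
      have h1 : ¬ ((⟨k + (m : ℕ), hm⟩ : Fin n) : ℕ) < k := by simp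
      have h3 := hLmap_ge x ⟨k + (m : ℕ), hm⟩ h1
      rw [congrFun hx ⟨k + (m : ℕ), hm⟩] at h3
      have h2 : (⟨((⟨k + (m : ℕ), hm⟩ : Fin n) : ℕ) - k, by omega⟩ : Fin (n - k)) = m := by
        apply Fin.ext
        simp
      rw [h2] at h3
      exact h3.symm
    have hproj_x : K.linearProjOfIsCompl q0 hcompl x = ⟨x, hxker⟩ :=
      Submodule.linearProjOfIsCompl_apply_left hcompl ⟨x, hxker⟩
    have h4 : bK.equivFun (⟨x, hxker⟩ : K) = 0 := by
      have : q x = bK.equivFun (K.linearProjOfIsCompl q0 hcompl x) := rfl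
      rw [this, hproj_x] at hqx
      exact hqx
    have h5 : (⟨x, hxker⟩ : K) = 0 := by
      apply bK.equivFun.injective
      simpa using h4
    exact congrArg Subtype.val h5
  refine ⟨LinearMap.linearEquivOfInjective Lmap hLinj rfl, ?_⟩
  intro x i
  rw [LinearMap.linearEquivOfInjective_apply]
  exact hLmap_lt x (Fin.castLE hk i) i.2

/-- The real decomposition lemma. -/
lemma real_decomp {Ω : Set (Fin n → ℝ)} (hconv : Convex ℝ Ω) (hopen : IsOpen Ω)
    (hne : Ω.Nonempty) :
    ∃ (k : ℕ) (hk : k ≤ n) (L : (Fin n → ℝ) ≃ₗ[ℝ] (Fin n → ℝ)) (d : Fin n → ℝ)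
      (ΩG : Set (Fin k → ℝ)),
      Convex ℝ ΩG ∧ IsOpen ΩG ∧ ΩG.Nonempty ∧ (∀ y ∈ ΩG, ∀ i, y i < 0) ∧
      (∀ x, x ∈ Ω ↔ (fun i : Fin k => L x (Fin.castLE hk i) + d (Fin.castLE hk i)) ∈ ΩG) := by
  classical
  obtain ⟨s, hsU, hspan, hind⟩ := exists_linearIndependent ℝ (bddFunc Ω)
  have hfin : s.Finite := hind.setFinite
  haveI := hfin.fintype
  set k := Fintype.card s with hkdef
  let e : Fin k ≃ s := (Fintype.equivFin s).symm
  let u : Fin k → Module.Dual ℝ (Fin n → ℝ) := fun i => (e i : Module.Dual ℝ (Fin n → ℝ))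
  have hu_ind : LinearIndependent ℝ u := hind.comp e e.injective
  have hdual : finrank ℝ (Module.Dual ℝ (Fin n → ℝ)) = n := by
    rw [Subspace.dual_finrank_eq]
    exact Module.finrank_fin_fun ℝ
  have hk : k ≤ n := by
    have h1 := hu_ind.fintype_card_le_finrank
    rwa [Fintype.card_fin, hdual] at h1
  have hu_mem : ∀ i, u i ∈ bddFunc Ω := fun i => hsU (e i).2
  have hu_range : Set.range u = s := by
    have : Set.range u = Subtype.val '' Set.range e := by
      rw [← Set.range_comp]
      rfl
    rw [this, e.surjective.range_eq, Set.image_univ, Subtype.range_coe]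
  obtain ⟨L, hL_apply⟩ := build_equiv hk u hu_ind
  choose sb hsb using hu_mem
  set d : Fin n → ℝ := fun j => if h : (j : ℕ) < k then -(sb ⟨j, h⟩ + 1) else 0 with hd
  have hd_lt : ∀ (i : Fin k), d (Fin.castLE hk i) = -(sb i + 1) := by
    intro i
    have h1 : ((Fin.castLE hk i : Fin n) : ℕ) < k := i.2
    simp only [hd, dif_pos h1]
    rfl
  set α : (Fin n → ℝ) → (Fin k → ℝ) :=
    fun x => fun i => L x (Fin.castLE hk i) + d (Fin.castLE hk i) with hα
  have hα_eq : α = (fun y : Fin k → ℝ => (fun i => d (Fin.castLE hk i)) + y) ∘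
      (LinearMap.pi u) := by
    funext x i
    simp [hα, hL_apply, LinearMap.pi_apply, add_comm]
  refine ⟨k, hk, L, d, α '' Ω, ?_, ?_, ?_, ?_, ?_⟩
  · rw [hα_eq, Set.image_comp]
    exact (hconv.linear_image (LinearMap.pi u)).translate _
  · have hα_eq' : α = (fun y : Fin k → ℝ => (fun i => d (Fin.castLE hk i)) + y) ∘
        (LinearMap.toContinuousLinearMap (LinearMap.pi u)) := by
      rw [hα_eq]; rfl
    rw [hα_eq', Set.image_comp]
    apply (Homeomorph.addLeft _).isOpenMap
    exact (LinearMap.toContinuousLinearMap (LinearMap.pi u)).isOpenMap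
      (pi_surjective u hu_ind) Ω hopen
  · exact hne.image α
  · rintro y ⟨x, hx, rfl⟩ i
    have hspec := hsb i x hx
    have h2 : α x i = u i x + d (Fin.castLE hk i) := by simp [hα, hL_apply]
    rw [h2, hd_lt]
    linarith
  · intro x
    constructor
    · intro hx
      exact Set.mem_image_of_mem α hx
    · rintro ⟨x₀, hx₀, hxx⟩
      have hcoord : ∀ i : Fin k, u i (x - x₀) = 0 := by
        intro i
        have h1 := congrFun hxx i
        simp only [hα, hL_apply] at h1
        have h2 : u i x₀ = u i x := by linarith
        simp [map_sub, h2]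
      have hspan0 : ∀ u' ∈ Submodule.span ℝ (Set.range u), u' (x - x₀) = 0 := by
        intro u' hmem
        induction hmem using Submodule.span_induction with
        | mem v hv =>
          obtain ⟨i, rfl⟩ := hv
          exact hcoord i
        | zero => simp
        | add v w _ _ hv hw => rw [LinearMap.add_apply, hv, hw, add_zero]
        | smul c v _ hv => rw [LinearMap.smul_apply, hv, smul_zero]
      have hall : ∀ u' ∈ bddFunc Ω, u' (x - x₀) = 0 := by
        intro u' hu'
        apply hspan0
        rw [hu_range, hspan]
        exact Submodule.subset_span hu'
      have hres := add_mem_of_dual_zero hconv hopen hall hx₀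
      simpa using hres



set_option maxHeartbeats 1000000

variable {n : ℕ}

lemma mulVec_map_re (A : Matrix (Fin n) (Fin n) ℝ) (z : Fin n → ℂ) (j : Fin n) :
    ((A.map Complex.ofRealHom).mulVec z j).re = A.mulVec (fun i => (z i).re) j := by
  simp [Matrix.mulVec, dotProduct, Complex.re_sum, Complex.re_ofReal_mul,
    Matrix.map_apply]

lemma mulVec_map_im (A : Matrix (Fin n) (Fin n) ℝ) (z : Fin n → ℂ) (j : Fin n) :
    ((A.map Complex.ofRealHom).mulVec z j).im = A.mulVec (fun i => (z i).im) j := by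
  simp [Matrix.mulVec, dotProduct, Complex.im_sum, Complex.im_ofReal_mul,
    Matrix.map_apply]

end TubeDecompAux

/-- Observation (decomposition of a convex tube domain): `Φ(D) = G × ℂ^{n-k}` with `G` a
convex tube in the polydomain `Hᵏ`, for some complex affine isomorphism `Φ` preserving
`ℝⁿ`; moreover `φ` is a complex geodesic for `D` iff `(Φ₁,…,Φ_k) ∘ φ` is one for `G`. -/
theorem convex_tube_decomposition {n : ℕ}
    (D : Set (Fin n → ℂ)) (Ω : Set (Fin n → ℝ)) (hTube : IsConvexTube D Ω) :
    ∃ (k : ℕ) (hk : k ≤ n) (T : Matrix (Fin n) (Fin n) ℂ) (c : Fin n → ℂ)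
      (G : Set (Fin k → ℂ)) (ΩG : Set (Fin k → ℝ)),
      IsUnit T.det ∧
      (fun z => T.mulVec z + c) '' {z : Fin n → ℂ | ∀ j, (z j).im = 0} =
        {z : Fin n → ℂ | ∀ j, (z j).im = 0} ∧
      IsConvexTube G ΩG ∧
      G ⊆ {w : Fin k → ℂ | ∀ i, (w i).re < 0} ∧
      (fun z => T.mulVec z + c) '' D =
        {z : Fin n → ℂ | (fun i : Fin k => z (Fin.castLE hk i)) ∈ G} ∧
      ∀ φ : ℂ → Fin n → ℂ, DifferentiableOn ℂ φ (ball 0 1) →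
        MapsTo φ (ball 0 1) D →
        (IsComplexGeodesic D φ ↔
          IsComplexGeodesic G
            (fun lam => fun i : Fin k => (T.mulVec (φ lam) + c) (Fin.castLE hk i))) := by
  classical
  obtain ⟨hconv, hopen, hne, hD⟩ := hTube
  obtain ⟨k, hk, L, d, ΩG, hGconv, hGopen, hGne, hGneg, hiff⟩ :=
    TubeDecompAux.real_decomp hconv hopen hne
  set M : Matrix (Fin n) (Fin n) ℝ := LinearMap.toMatrix' (L : (Fin n → ℝ) →ₗ[ℝ] (Fin n → ℝ))
    with hMdef
  set Minv : Matrix (Fin n) (Fin n) ℝ :=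
    LinearMap.toMatrix' (L.symm : (Fin n → ℝ) →ₗ[ℝ] (Fin n → ℝ)) with hMinvdef
  set T : Matrix (Fin n) (Fin n) ℂ := M.map Complex.ofRealHom with hTdef
  set Tinv : Matrix (Fin n) (Fin n) ℂ := Minv.map Complex.ofRealHom with hTinvdef
  set c : Fin n → ℂ := fun j => (d j : ℂ) with hcdef
  set G : Set (Fin k → ℂ) := {w | (fun i => (w i).re) ∈ ΩG} with hGdef
  set Φf : (Fin n → ℂ) → (Fin n → ℂ) := fun z => T.mulVec z + c with hΦfdef
  set Ψf : (Fin n → ℂ) → (Fin n → ℂ) := fun z => Tinv.mulVec (z - c) with hΨfdef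
  have hM : ∀ x : Fin n → ℝ, M.mulVec x = L x := by
    intro x
    rw [hMdef, ← Matrix.toLin'_apply, Matrix.toLin'_toMatrix']
    rfl
  have hMinv : ∀ x : Fin n → ℝ, Minv.mulVec x = L.symm x := by
    intro x
    rw [hMinvdef, ← Matrix.toLin'_apply, Matrix.toLin'_toMatrix']
    rfl
  have hre : ∀ z j, (Φf z j).re = L (fun i => (z i).re) j + d j := by
    intro z j
    have : Φf z j = T.mulVec z j + c j := rfl
    rw [this, Complex.add_re, hTdef, TubeDecompAux.mulVec_map_re, hM]
    simp [hcdef]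
  have him : ∀ z j, (Φf z j).im = L (fun i => (z i).im) j := by
    intro z j
    have : Φf z j = T.mulVec z j + c j := rfl
    rw [this, Complex.add_im, hTdef, TubeDecompAux.mulVec_map_im, hM]
    simp [hcdef]
  have hΨre : ∀ z j, (Ψf z j).re = L.symm (fun i => (z i).re - d i) j := by
    intro z j
    have h1 : Ψf z j = Tinv.mulVec (z - c) j := rfl
    rw [h1, hTinvdef, TubeDecompAux.mulVec_map_re, hMinv]
    have h2 : (fun i => ((z - c) i).re) = fun i => (z i).re - d i := by
      funext i
      simp [hcdef]
    rw [h2]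
  have hΨim : ∀ z j, (Ψf z j).im = L.symm (fun i => (z i).im) j := by
    intro z j
    have h1 : Ψf z j = Tinv.mulVec (z - c) j := rfl
    rw [h1, hTinvdef, TubeDecompAux.mulVec_map_im, hMinv]
    have h2 : (fun i => ((z - c) i).im) = fun i => (z i).im := by
      funext i
      simp [hcdef]
    rw [h2]
  have hΨΦ : ∀ z, Ψf (Φf z) = z := by
    intro z
    funext j
    apply Complex.ext
    · rw [hΨre]
      have : (fun i => (Φf z i).re - d i) = L (fun i => (z i).re) := by
        funext i
        rw [hre]
        ring
      rw [this, L.symm_apply_apply]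
    · rw [hΨim]
      have : (fun i => (Φf z i).im) = L (fun i => (z i).im) := by
        funext i
        rw [him]
      rw [this, L.symm_apply_apply]
  have hΦΨ : ∀ z, Φf (Ψf z) = z := by
    intro z
    funext j
    apply Complex.ext
    · rw [hre]
      have : (fun i => (Ψf z i).re) = L.symm (fun i => (z i).re - d i) := by
        funext i
        rw [hΨre]
      rw [this, L.apply_symm_apply]
      ring
    · rw [him]
      have : (fun i => (Ψf z i).im) = L.symm (fun i => (z i).im) := by
        funext i
        rw [hΨim]
      rw [this, L.apply_symm_apply]
  -- determinant
  have hMM : M * Minv = 1 := by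
    rw [hMdef, hMinvdef, ← LinearMap.toMatrix'_comp]
    have : (L : (Fin n → ℝ) →ₗ[ℝ] (Fin n → ℝ)) ∘ₗ (L.symm : (Fin n → ℝ) →ₗ[ℝ] (Fin n → ℝ))
        = LinearMap.id := by
      apply LinearMap.ext
      intro x
      simp
    rw [this, LinearMap.toMatrix'_id]
  have hdetM : IsUnit M.det := by
    have h1 : M.det * Minv.det = 1 := by
      rw [← Matrix.det_mul, hMM, Matrix.det_one]
    exact IsUnit.of_mul_eq_one _ h1
  have hdetT : IsUnit T.det := by
    have h1 : T = Complex.ofRealHom.mapMatrix M := rfl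
    rw [h1, ← RingHom.map_det]
    exact hdetM.map Complex.ofRealHom
  -- real subspace preserved
  have himreal : Φf '' {z : Fin n → ℂ | ∀ j, (z j).im = 0} = {z : Fin n → ℂ | ∀ j, (z j).im = 0} := by
    ext w
    constructor
    · rintro ⟨z, hz, rfl⟩ j
      rw [him]
      have : (fun i => (z i).im) = (0 : Fin n → ℝ) := funext hz
      rw [this, map_zero]
      rfl
    · intro hw
      refine ⟨Ψf w, ?_, hΦΨ w⟩
      intro j
      rw [hΨim]
      have : (fun i => (w i).im) = (0 : Fin n → ℝ) := funext hw
      rw [this, map_zero]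
      rfl
  -- tube membership
  set D' : Set (Fin n → ℂ) := {z | (fun i : Fin k => z (Fin.castLE hk i)) ∈ G} with hD'def
  have hΦmem : ∀ z, Φf z ∈ D' ↔ z ∈ D := by
    intro z
    rw [hD]
    have h1 : Φf z ∈ D' ↔ (fun i : Fin k => (Φf z (Fin.castLE hk i)).re) ∈ ΩG := Iff.rfl
    rw [h1]
    have h2 : (fun i : Fin k => (Φf z (Fin.castLE hk i)).re)
        = fun i : Fin k => L (fun i' => (z i').re) (Fin.castLE hk i) + d (Fin.castLE hk i) := by
      funext i
      rw [hre]
    rw [h2]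
    exact (hiff (fun i' => (z i').re)).symm
  have himageD : Φf '' D = D' := by
    ext w
    constructor
    · rintro ⟨z, hz, rfl⟩
      exact (hΦmem z).2 hz
    · intro hw
      refine ⟨Ψf w, ?_, hΦΨ w⟩
      apply (hΦmem (Ψf w)).1
      rw [hΦΨ]
      exact hw
  -- differentiability infrastructure
  have hΦdiff : Differentiable ℂ Φf := by
    have hlin : Differentiable ℂ (fun z : Fin n → ℂ => T.mulVec z) := by
      have h1 : (fun z : Fin n → ℂ => T.mulVec z)
          = ⇑(LinearMap.toContinuousLinearMap (Matrix.mulVecLin T)) := by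
        funext z
        simp [Matrix.mulVecLin_apply]
      rw [h1]
      exact (LinearMap.toContinuousLinearMap (Matrix.mulVecLin T)).differentiable
    exact hlin.add_const c
  have hΨdiff : Differentiable ℂ Ψf := by
    have hlin : Differentiable ℂ (fun z : Fin n → ℂ => Tinv.mulVec z) := by
      have h1 : (fun z : Fin n → ℂ => Tinv.mulVec z)
          = ⇑(LinearMap.toContinuousLinearMap (Matrix.mulVecLin Tinv)) := by
        funext z
        simp [Matrix.mulVecLin_apply]
      rw [h1]
      exact (LinearMap.toContinuousLinearMap (Matrix.mulVecLin Tinv)).differentiable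
    exact hlin.comp (differentiable_id.sub_const c)
  set π : (Fin n → ℂ) → (Fin k → ℂ) := fun z i => z (Fin.castLE hk i) with hπdef
  have hπdiff : Differentiable ℂ π := by
    apply differentiable_pi.mpr
    intro i
    exact (ContinuousLinearMap.proj (R := ℂ) (φ := fun _ : Fin n => ℂ)
      (Fin.castLE hk i)).differentiable
  set glue : (Fin k → ℂ) → (Fin n → ℂ) → (Fin n → ℂ) :=
    fun w v j => if h : (j : ℕ) < k then w ⟨j, h⟩ else v j with hgluedef
  have hglueπ : ∀ w v, π (glue w v) = w := by
    intro w v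
    funext i
    have h1 : ((Fin.castLE hk i : Fin n) : ℕ) < k := i.2
    simp only [hπdef, hgluedef, dif_pos h1]
    rfl
  have hglue_self : ∀ z, glue (π z) z = z := by
    intro z
    funext j
    by_cases h : (j : ℕ) < k
    · simp only [hgluedef, dif_pos h, hπdef]
      congr 1
    · simp only [hgluedef, dif_neg h]
  have hglue_mem : ∀ w v, w ∈ G → glue w v ∈ D' := by
    intro w v hw
    have : (fun i : Fin k => glue w v (Fin.castLE hk i)) = w := hglueπ w v
    show (fun i : Fin k => glue w v (Fin.castLE hk i)) ∈ G
    rw [this]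
    exact hw
  have hΨD : ∀ ζ ∈ D', Ψf ζ ∈ D := by
    intro ζ hζ
    apply (hΦmem (Ψf ζ)).1
    rw [hΦΨ]
    exact hζ
  refine ⟨k, hk, T, c, G, ΩG, hdetT, himreal, ⟨hGconv, hGopen, hGne, rfl⟩, ?_, himageD, ?_⟩
  · intro w hw i
    exact hGneg _ hw i
  · intro φ hφd hφm
    constructor
    · rintro ⟨-, -, f, hfd, hfm, hfl⟩
      have hglue0diff : Differentiable ℂ (fun w : Fin k → ℂ => glue w 0) := by
        apply differentiable_pi.mpr
        intro j
        by_cases h : (j : ℕ) < k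
        · simp only [hgluedef, dif_pos h]
          exact (ContinuousLinearMap.proj (R := ℂ) (φ := fun _ : Fin k => ℂ)
            (⟨j, h⟩ : Fin k)).differentiable
        · simp only [hgluedef, dif_neg h]
          exact differentiable_const _
      have hinner_diff : Differentiable ℂ (fun w : Fin k → ℂ => Ψf (glue w 0)) :=
        hΨdiff.comp hglue0diff
      have hinner_maps : MapsTo (fun w : Fin k → ℂ => Ψf (glue w 0)) G D := by
        intro w hw
        exact hΨD _ (hglue_mem w 0 hw)
      refine ⟨?_, ?_, fun w => f (Ψf (glue w 0)), ?_, ?_, ?_⟩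
      · have h1 : Differentiable ℂ (fun z => π (Φf z)) := hπdiff.comp hΦdiff
        have h2 := h1.comp_differentiableOn hφd
        exact h2
      · intro lam hlam
        exact (hΦmem (φ lam)).2 (hφm hlam)
      · have := hfd.comp hinner_diff.differentiableOn hinner_maps
        exact this
      · intro w hw
        exact hfm (hinner_maps hw)
      · intro lam hlam
        set Z : Fin n → ℂ := Φf (φ lam) with hZdef
        have hZD' : Z ∈ D' := (hΦmem (φ lam)).2 (hφm hlam)
        have hπZG : π Z ∈ G := hZD'
        set F : ℂ → ℂ := fun t => f (Ψf (glue (π Z) (t • Z))) with hFdef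
        have hmdiff : Differentiable ℂ (fun t : ℂ => glue (π Z) (t • Z)) := by
          apply differentiable_pi.mpr
          intro j
          by_cases h : (j : ℕ) < k
          · simp only [hgluedef, dif_pos h]
            exact differentiable_const _
          · simp only [hgluedef, dif_neg h, Pi.smul_apply, smul_eq_mul]
            exact differentiable_id.mul_const _
        have hmmaps : MapsTo (fun t : ℂ => Ψf (glue (π Z) (t • Z))) univ D := by
          intro t _
          exact hΨD _ (hglue_mem _ _ hπZG)
        have hFdiff : Differentiable ℂ F := by
          have h1 := hfd.comp ((hΨdiff.comp hmdiff).differentiableOn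
            (s := univ)) hmmaps
          rw [differentiableOn_univ] at h1
          exact h1
        have hFbdd : Bornology.IsBounded (Set.range F) := by
          apply Bornology.IsBounded.subset (Metric.isBounded_ball (x := (0:ℂ)) (r := 1))
          rw [Set.range_subset_iff]
          intro t
          exact hfm (hΨD _ (hglue_mem _ _ hπZG))
        have hF01 : F 0 = F 1 := hFdiff.apply_eq_apply_of_bounded hFbdd 0 1
        have hF1 : F 1 = lam := by
          have h3 : F 1 = f (Ψf Z) := by
            rw [hFdef]
            simp only [one_smul]
            rw [hglue_self]
          have h2 : Ψf Z = φ lam := hΨΦ (φ lam)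
          rw [h3, h2]
          exact hfl lam hlam
        have hF0 : F 0 = f (Ψf (glue (π Z) 0)) := by
          rw [hFdef]
          simp only [zero_smul]
        have hgoal : (fun i : Fin k => Φf (φ lam) (Fin.castLE hk i)) = π Z := rfl
        show f (Ψf (glue (fun i : Fin k => (T.mulVec (φ lam) + c) (Fin.castLE hk i)) 0)) = lam
        have hfinal : f (Ψf (glue (π Z) 0)) = lam := by
          rw [← hF0, hF01, hF1]
        exact hfinal
    · rintro ⟨-, -, g, hgd, hgm, hgl⟩
      refine ⟨hφd, hφm, fun z => g (π (Φf z)), ?_, ?_, ?_⟩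
      · have h1 : Differentiable ℂ (fun z => π (Φf z)) := hπdiff.comp hΦdiff
        apply hgd.comp h1.differentiableOn
        intro z hz
        exact (hΦmem z).2 hz
      · intro z hz
        exact hgm ((hΦmem z).2 hz)
      · intro lam hlam
        exact hgl _ hlam
end

section
/- Let a ∈ ℂ and b ∈ ℝ satisfy |b| < 2|a|, set h(λ) = āλ² + bλ + a, and let c = −b/(2|a| + √(4|a|² − b²)). Then for every λ ∈ 𝔻: (1/2π) ∫_{{ζ ∈ 𝕋 : ζ̄h(ζ) > 0}} (ζ+λ)/(ζ−λ) dL(ζ) = τ(i T_c((ā/|a|)λ)), where τ(w) = −(i/π) log(i(1+w)/(1−w)) with log the branch of the logarithm whose argument lies in [0, 2π), and T_c(w) = (w − c)/(1 − c̄ w). -/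
open MeasureTheory Complex Metric Set Filter ComplexConjugate

/-- The branch of the complex logarithm with argument in `[0, 2π)`. -/
noncomputable def log2pi (w : ℂ) : ℂ :=
  Real.log (‖w‖) +
    (if Complex.arg w < 0 then Complex.arg w + 2 * Real.pi else Complex.arg w) * Complex.I

/-- The biholomorphism `τ : 𝔻 → S` onto the strip, `τ(w) = -(i/π) log(i(1+w)/(1-w))`. -/
noncomputable def tau (w : ℂ) : ℂ :=
  -(Complex.I / Real.pi) * log2pi (Complex.I * (1 + w) / (1 - w))


section Helpers

lemma tCoe_coe (x : ℝ) : tCoe x = Complex.exp ((x : ℂ) * Complex.I) := by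
  simp [tCoe, circleMap]

lemma continuous_tCoe : Continuous tCoe :=
  continuous_coinduced_dom.mpr (continuous_circleMap 0 1)

lemma one_sub_ne_zero_of_abs_lt_one' {w : ℂ} (h : ‖w‖ < 1) : (1 : ℂ) - w ≠ 0 := by
  intro hw
  have : ‖w‖ = 1 := by
    have : w = 1 := by linear_combination -hw
    simp [this]
  linarith

lemma re_pos_of_abs_lt_one {w : ℂ} (h : ‖w‖ < 1) : 0 < (1 - w).re := by
  have h2 : |w.re| < 1 := lt_of_le_of_lt (Complex.abs_re_le_norm w) h
  simp only [Complex.sub_re, Complex.one_re]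
  linarith [(abs_lt.mp h2).2]

lemma antideriv {lam : ℂ} (hlam : ‖lam‖ < 1) (x : ℝ) :
    HasDerivAt (fun y : ℝ => (y : ℂ) -
        2 * Complex.I * Complex.log (1 - lam * Complex.exp (-(y:ℂ) * Complex.I)))
      ((Complex.exp ((x:ℂ) * Complex.I) + lam) / (Complex.exp ((x:ℂ) * Complex.I) - lam)) x := by
  have hane : ‖lam * Complex.exp (-(x:ℂ) * Complex.I)‖ < 1 := by
    rw [norm_mul]
    rw [show (-(x:ℂ) * Complex.I) = ((-x : ℝ) : ℂ) * Complex.I by push_cast; ring]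
    rw [Complex.norm_exp_ofReal_mul_I]
    simpa using hlam
  have hne : (1 : ℂ) - lam * Complex.exp (-(x:ℂ) * Complex.I) ≠ 0 :=
    one_sub_ne_zero_of_abs_lt_one' hane
  have hslit : (1 : ℂ) - lam * Complex.exp (-(x:ℂ) * Complex.I) ∈ Complex.slitPlane := by
    left
    have h2 : |(lam * Complex.exp (-(x:ℂ) * Complex.I)).re| < 1 :=
      lt_of_le_of_lt (Complex.abs_re_le_norm _) hane
    simp only [Complex.sub_re, Complex.one_re]
    linarith [(abs_lt.mp h2).2]
  have h1 : HasDerivAt (fun z : ℂ => Complex.exp (-z * Complex.I))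
      (Complex.exp (-(x:ℂ) * Complex.I) * -Complex.I) (x:ℂ) := by
    have := ((hasDerivAt_id (x:ℂ)).neg.mul_const Complex.I).cexp
    simpa using this
  have h2 : HasDerivAt (fun z : ℂ => (1 : ℂ) - lam * Complex.exp (-z * Complex.I))
      (-(lam * (Complex.exp (-(x:ℂ) * Complex.I) * -Complex.I))) (x:ℂ) :=
    (h1.const_mul lam).const_sub 1
  have h3 : HasDerivAt (fun z : ℂ => Complex.log (1 - lam * Complex.exp (-z * Complex.I)))
      ((-(lam * (Complex.exp (-(x:ℂ) * Complex.I) * -Complex.I))) /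
        (1 - lam * Complex.exp (-(x:ℂ) * Complex.I))) (x:ℂ) :=
    h2.clog hslit
  have h4 : HasDerivAt (fun z : ℂ =>
        z - 2 * Complex.I * Complex.log (1 - lam * Complex.exp (-z * Complex.I)))
      (1 - 2 * Complex.I * ((-(lam * (Complex.exp (-(x:ℂ) * Complex.I) * -Complex.I))) /
        (1 - lam * Complex.exp (-(x:ℂ) * Complex.I)))) (x:ℂ) :=
    (hasDerivAt_id _).sub (h3.const_mul _)
  have h5 := h4.comp_ofReal
  convert h5 using 1
  have hexne : Complex.exp ((x:ℂ) * Complex.I) ≠ 0 := Complex.exp_ne_zero _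
  have hinv : Complex.exp (-(x:ℂ) * Complex.I) = (Complex.exp ((x:ℂ) * Complex.I))⁻¹ := by
    rw [← Complex.exp_neg]; ring_nf
  have hdne : Complex.exp ((x:ℂ) * Complex.I) - lam ≠ 0 := by
    have heq : Complex.exp ((x:ℂ) * Complex.I) - lam =
        Complex.exp ((x:ℂ) * Complex.I) * (1 - lam * Complex.exp (-(x:ℂ) * Complex.I)) := by
      rw [hinv]; field_simp
    rw [heq]
    exact mul_ne_zero hexne hne
  rw [hinv] at hne ⊢
  field_simp
  linear_combination (2*lam) * Complex.I_sq

lemma circle_set_integral (g : AddCircle (2*Real.pi) → ℂ) (S : Set (AddCircle (2*Real.pi)))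
    (hS : MeasurableSet S) (t : ℝ) :
    ∫ θ in S, g θ =
      ∫ x in (((↑) : ℝ → AddCircle (2*Real.pi)) ⁻¹' S) ∩ Ioc t (t + 2*Real.pi), g ↑x := by
  have hpre : MeasurableSet ((((↑) : ℝ → AddCircle (2*Real.pi))) ⁻¹' S) :=
    AddCircle.measurable_mk' hS
  rw [← integral_indicator hS, ← AddCircle.integral_preimage (2*Real.pi) t (S.indicator g)]
  have : ∀ x : ℝ, S.indicator g (↑x : AddCircle (2*Real.pi)) =
      ((((↑) : ℝ → AddCircle (2*Real.pi))) ⁻¹' S).indicator (fun y : ℝ => g ↑y) x := by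
    intro x
    by_cases hx : (↑x : AddCircle (2*Real.pi)) ∈ S <;> simp [Set.indicator, hx]
  simp_rw [this]
  rw [integral_indicator hpre, Measure.restrict_restrict hpre]

end Helpers

set_option maxHeartbeats 2000000 in
/-- Example (explicit formula for the geodesic of the strip with boundary measure
`L` restricted to `{ζ ∈ 𝕋 : ζ̄h(ζ) > 0}`). -/
theorem strip_geodesic_formula (a : ℂ) (b : ℝ) (hab : |b| < 2 * ‖a‖)
    (c : ℝ)
    (hc : c = -b / (2 * ‖a‖ + Real.sqrt (4 * ‖a‖ ^ 2 - b ^ 2))) :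
    ∀ lam ∈ ball (0 : ℂ) 1,
      (1 / (2 * Real.pi) : ℂ) *
          ∫ θ in {θ : AddCircle (2 * Real.pi) | 0 < b + 2 * (a * conj (tCoe θ)).re},
            (tCoe θ + lam) / (tCoe θ - lam) =
        tau (Complex.I * ((((conj a / ‖a‖) * lam) - (c : ℂ)) /
          (1 - (c : ℂ) * ((conj a / ‖a‖) * lam)))) := by
  intro lam hlam
  have hlam' : ‖lam‖ < 1 := by
    simpa [Complex.dist_eq] using mem_ball.mp hlam
  have hb := abs_nonneg b
  have hr : 0 < ‖a‖ := by linarith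
  have hrne : (‖a‖ : ℝ) ≠ 0 := ne_of_gt hr
  set r : ℝ := ‖a‖ with hrdef
  set α : ℝ := Complex.arg a with hαdef
  have hblt : -(2*r) < b ∧ b < 2*r :=
    ⟨by linarith [neg_abs_le b], by linarith [le_abs_self b]⟩
  have hk1 : -b/(2*r) < 1 := by rw [div_lt_one (by linarith)]; linarith [hblt.1]
  have hk2 : (-1 : ℝ) < -b/(2*r) := by rw [lt_div_iff₀ (by linarith)]; linarith [hblt.2]
  set θ₀ : ℝ := Real.arccos (-b/(2*r)) with hθdef
  have hθpos : 0 < θ₀ := Real.arccos_pos.mpr hk1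
  have hθlepi : θ₀ ≤ Real.pi := Real.arccos_le_pi _
  have hθlt : θ₀ < Real.pi := by
    rcases lt_or_eq_of_le hθlepi with h | h
    · exact h
    · exact absurd (Real.arccos_eq_pi.mp h) (by push_neg; linarith)
  have hcos : Real.cos θ₀ = -b/(2*r) := Real.cos_arccos hk2.le hk1.le
  have hsin : Real.sin θ₀ = Real.sqrt (1 - (-b/(2*r))^2) := Real.sin_arccos _
  have hsinpos : 0 < Real.sin θ₀ := Real.sin_pos_of_pos_of_lt_pi hθpos hθlt
  have hpyth : Real.sin θ₀ ^ 2 + Real.cos θ₀ ^ 2 = 1 := Real.sin_sq_add_cos_sq θ₀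
  clear_value θ₀
  clear_value r
  clear_value α
  have hceq : c = Real.cos θ₀ / (1 + Real.sin θ₀) := by
    rw [hc]
    have h4 : Real.sqrt (4 * r ^ 2 - b^2) = 2*r*Real.sqrt (1 - (-b/(2*r))^2) := by
      rw [show 4 * r ^2 - b^2 = (2*r)^2 * (1 - (-b/(2*r))^2) by field_simp; ring]
      rw [Real.sqrt_mul (sq_nonneg _), Real.sqrt_sq (by linarith)]
    rw [h4, ← hsin, hcos]
    rw [div_eq_div_iff (by nlinarith) (by nlinarith)]
    field_simp
  have hcabs : |c| < 1 := by
    rw [hceq, abs_div, abs_of_pos (by linarith : (0:ℝ) < 1 + Real.sin θ₀),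
      div_lt_one (by linarith)]
    have := Real.abs_cos_le_one θ₀
    linarith
  -- complex abbreviations
  set u : ℂ := conj a / ((r : ℝ) : ℂ) with hudef
  have hu : u = Complex.exp (-(α:ℂ) * Complex.I) := by
    rw [hudef]
    rw [div_eq_iff (by exact_mod_cast hrne)]
    conv_lhs => rw [← Complex.norm_mul_exp_arg_mul_I a]
    rw [map_mul, Complex.conj_ofReal, ← Complex.exp_conj]
    rw [map_mul, Complex.conj_ofReal, Complex.conj_I]
    rw [← hrdef, ← hαdef]
    ring
  have huabs : ‖u‖ = 1 := by
    rw [hu, show (-(α:ℂ) * Complex.I) = ((-α : ℝ) : ℂ) * Complex.I by push_cast; ring,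
      Complex.norm_exp_ofReal_mul_I]
  set v : ℂ := u * lam with hvdef
  have hv : ‖v‖ < 1 := by rw [hvdef, norm_mul, huabs, one_mul]; exact hlam'
  clear_value u
  clear_value v
  -- Step 1: reduce the set integral to an interval integral
  have hContRe : Continuous fun θ : AddCircle (2*Real.pi) => b + 2 * (a * conj (tCoe θ)).re := by
    apply continuous_const.add
    apply continuous_const.mul
    exact Complex.continuous_re.comp (continuous_const.mul (continuous_star.comp continuous_tCoe))
  have hS : MeasurableSet {θ : AddCircle (2*Real.pi) | 0 < b + 2 * (a * conj (tCoe θ)).re} :=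
    (isOpen_lt continuous_const hContRe).measurableSet
  rw [circle_set_integral _ _ hS (α - Real.pi)]
  have hre : ∀ x : ℝ, (a * conj (Complex.exp ((x:ℂ) * Complex.I))).re = r * Real.cos (x - α) := by
    intro x
    have key : a * conj (Complex.exp ((x:ℂ) * Complex.I)) =
        ((r : ℝ) : ℂ) * Complex.exp (((α - x : ℝ) : ℂ) * Complex.I) := by
      conv_lhs => rw [← Complex.norm_mul_exp_arg_mul_I a]
      rw [← Complex.exp_conj, map_mul, Complex.conj_ofReal, Complex.conj_I, ← hrdef, ← hαdef]
      rw [mul_assoc, ← Complex.exp_add]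
      push_cast
      ring_nf
    rw [key, Complex.re_ofReal_mul, Complex.exp_ofReal_mul_I_re,
      show α - x = -(x - α) by ring, Real.cos_neg]
  have hpre_eq : (((↑) : ℝ → AddCircle (2*Real.pi)) ⁻¹'
        {θ : AddCircle (2*Real.pi) | 0 < b + 2 * (a * conj (tCoe θ)).re}) ∩
        Ioc (α - Real.pi) (α - Real.pi + 2*Real.pi) = Ioo (α - θ₀) (α + θ₀) := by
    ext x
    simp only [mem_inter_iff, mem_preimage, mem_setOf_eq, mem_Ioc, mem_Ioo, tCoe_coe, hre]
    constructor
    · rintro ⟨hxc, hx1, hx2⟩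
      have hgt : -b/(2*r) < Real.cos (x - α) := by
        rw [div_lt_iff₀ (by linarith)]; linarith
      have habs : |x - α| < θ₀ := by
        by_contra hge
        push_neg at hge
        have h1 : |x - α| ≤ Real.pi := abs_le.mpr ⟨by linarith, by linarith⟩
        have h2 := Real.cos_le_cos_of_nonneg_of_le_pi hθpos.le h1 hge
        rw [Real.cos_abs] at h2
        rw [hcos] at h2
        linarith
      have := abs_lt.mp habs
      exact ⟨by linarith [this.1], by linarith [this.2]⟩
    · rintro ⟨hx1, hx2⟩
      have habs : |x - α| < θ₀ := abs_lt.mpr ⟨by linarith, by linarith⟩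
      have h2 := Real.cos_lt_cos_of_nonneg_of_le_pi (abs_nonneg (x-α)) hθlepi habs
      rw [Real.cos_abs] at h2
      rw [hcos] at h2
      have hb2 : -b < Real.cos (x-α) * (2*r) := (div_lt_iff₀ (by linarith)).mp h2
      exact ⟨by linarith, by linarith, by linarith⟩
  rw [hpre_eq]
  simp only [tCoe_coe]
  have hexne : ∀ x : ℝ, Complex.exp ((x:ℂ) * Complex.I) - lam ≠ 0 := by
    intro x h0
    have h1 : ‖Complex.exp ((x:ℂ) * Complex.I)‖ = 1 :=
      Complex.norm_exp_ofReal_mul_I x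
    rw [sub_eq_zero.mp h0] at h1
    linarith
  have hcont : Continuous fun x : ℝ =>
      (Complex.exp ((x:ℂ) * Complex.I) + lam) / (Complex.exp ((x:ℂ) * Complex.I) - lam) := by
    apply Continuous.div _ _ hexne <;> fun_prop
  rw [← MeasureTheory.integral_Ioc_eq_integral_Ioo,
    ← intervalIntegral.integral_of_le (by linarith : α - θ₀ ≤ α + θ₀)]
  rw [intervalIntegral.integral_eq_sub_of_hasDerivAt (fun x _ => antideriv hlam' x)
    (hcont.intervalIntegrable _ _)]
  -- rewrite the endpoint values
  have e1 : lam * Complex.exp (-(((α+θ₀) : ℝ):ℂ) * Complex.I) =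
      v * Complex.exp (-(θ₀:ℂ) * Complex.I) := by
    rw [hvdef, hu]
    rw [show -(((α+θ₀) : ℝ):ℂ) * Complex.I = -(α:ℂ) * Complex.I + -(θ₀:ℂ) * Complex.I by
      push_cast; ring, Complex.exp_add]
    ring
  have e2 : lam * Complex.exp (-(((α-θ₀) : ℝ):ℂ) * Complex.I) =
      v * Complex.exp ((θ₀:ℂ) * Complex.I) := by
    rw [hvdef, hu]
    rw [show -(((α-θ₀) : ℝ):ℂ) * Complex.I = -(α:ℂ) * Complex.I + (θ₀:ℂ) * Complex.I by
      push_cast; ring, Complex.exp_add]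
    ring
  rw [e1, e2]
  set A : ℂ := 1 - v * Complex.exp (-(θ₀:ℂ) * Complex.I) with hA
  set B : ℂ := 1 - v * Complex.exp ((θ₀:ℂ) * Complex.I) with hB
  clear_value A
  clear_value B
  have hAvabs : ‖v * Complex.exp (-(θ₀:ℂ) * Complex.I)‖ < 1 := by
    rw [norm_mul, show -(θ₀:ℂ) * Complex.I = ((-θ₀ : ℝ):ℂ) * Complex.I by push_cast; ring,
      Complex.norm_exp_ofReal_mul_I, mul_one]
    exact hv
  have hBvabs : ‖v * Complex.exp ((θ₀:ℂ) * Complex.I)‖ < 1 := by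
    rw [norm_mul, Complex.norm_exp_ofReal_mul_I, mul_one]
    exact hv
  have hAne : A ≠ 0 := by rw [hA]; exact one_sub_ne_zero_of_abs_lt_one' hAvabs
  have hBne : B ≠ 0 := by rw [hB]; exact one_sub_ne_zero_of_abs_lt_one' hBvabs
  have hAarg : |Complex.arg A| < Real.pi/2 := by
    rw [hA]
    exact Complex.abs_arg_lt_pi_div_two_iff.mpr (Or.inl (re_pos_of_abs_lt_one hAvabs))
  have hBarg : |Complex.arg B| < Real.pi/2 := by
    rw [hB]
    exact Complex.abs_arg_lt_pi_div_two_iff.mpr (Or.inl (re_pos_of_abs_lt_one hBvabs))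
  -- Step 2: the right-hand side
  set q : ℂ := (((c : ℝ) : ℂ) + Complex.I) / (1 + Complex.I * ((c : ℝ):ℂ)) with hqdef
  have h1ic : (1:ℂ) + Complex.I * ((c : ℝ):ℂ) ≠ 0 := by
    intro h
    have := congrArg Complex.re h
    simp at this
  have hc1 : c * (1 + Real.sin θ₀) = Real.cos θ₀ := by
    rw [hceq]; field_simp
  have hc2 : Real.cos θ₀ * c = 1 - Real.sin θ₀ := by
    rw [hceq]
    rw [mul_div_assoc']
    rw [div_eq_iff (by linarith : (1:ℝ) + Real.sin θ₀ ≠ 0)]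
    nlinarith [hpyth]
  have hqexp : q = Complex.exp ((θ₀:ℂ) * Complex.I) := by
    rw [hqdef, Complex.exp_mul_I, ← Complex.ofReal_cos, ← Complex.ofReal_sin,
      div_eq_iff h1ic]
    apply Complex.ext <;>
      simp only [Complex.add_re, Complex.add_im, Complex.mul_re, Complex.mul_im,
        Complex.I_re, Complex.I_im, Complex.ofReal_re, Complex.ofReal_im,
        Complex.one_re, Complex.one_im] <;>
      nlinarith [hc1, hc2]
  have hqne : q ≠ 0 := by rw [hqexp]; exact Complex.exp_ne_zero _
  have hqabs : ‖q‖ = 1 := by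
    rw [hqexp, Complex.norm_exp_ofReal_mul_I]
  clear_value q
  set m : ℂ := (v - ((c : ℝ):ℂ)) / (1 - ((c : ℝ):ℂ) * v) with hmdef
  clear_value m
  have hcv : (1:ℂ) - ((c : ℝ):ℂ) * v ≠ 0 := by
    apply one_sub_ne_zero_of_abs_lt_one'
    rw [norm_mul, Complex.norm_real, Real.norm_eq_abs]
    nlinarith [norm_nonneg v, abs_nonneg c]
  have hmabs : ‖m‖ < 1 := by
    rw [hmdef, norm_div, div_lt_one (norm_pos_iff.mpr hcv), Complex.norm_def,
      Complex.norm_def]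
    apply Real.sqrt_lt_sqrt (Complex.normSq_nonneg _)
    have hv2 : v.re^2 + v.im^2 < 1 := by
      have h1 := Complex.sq_norm v
      rw [Complex.normSq_apply] at h1
      nlinarith [norm_nonneg v]
    have hc2 : c^2 < 1 := by nlinarith [abs_nonneg c, _root_.sq_abs c]
    simp only [Complex.normSq_apply, Complex.sub_re, Complex.sub_im, Complex.mul_re,
      Complex.mul_im, Complex.ofReal_re, Complex.ofReal_im, Complex.one_re, Complex.one_im]
    nlinarith [sq_nonneg (v.re - c), sq_nonneg (v.im)]
  have hIm : (1:ℂ) - Complex.I * m ≠ 0 := by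
    apply one_sub_ne_zero_of_abs_lt_one'
    rw [norm_mul, Complex.norm_I, one_mul]
    exact hmabs
  have hqv : (1:ℂ) - q * v ≠ 0 := by
    apply one_sub_ne_zero_of_abs_lt_one'
    rw [norm_mul, hqabs, one_mul]
    exact hv
  set z : ℂ := (q - v)/(1 - q*v) with hzdef
  clear_value z
  have hzeq : Complex.I * (1 + Complex.I * m) / (1 - Complex.I * m) = z := by
    have hcv' : (1:ℂ) - v * ((c : ℝ):ℂ) ≠ 0 := by rw [mul_comm]; exact hcv
    rw [hzdef, div_eq_div_iff hIm hqv, hmdef, hqdef]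
    field_simp
    ring_nf
    simp only [Complex.I_sq, Complex.I_pow_three]
    ring_nf
  have hIsimp : Complex.I * (1 + Complex.I * m) = Complex.I - m := by
    linear_combination m * Complex.I_sq
  have hm2 : m.re^2 + m.im^2 < 1 := by
    have h1 := Complex.sq_norm m
    rw [Complex.normSq_apply] at h1
    nlinarith [norm_nonneg m]
  have hzim : 0 < z.im := by
    rw [← hzeq, hIsimp]
    have hpos : 0 < Complex.normSq (1 - Complex.I*m) := Complex.normSq_pos.mpr hIm
    have e : ((Complex.I - m)/(1 - Complex.I*m)).im =
        (1 - (m.re^2 + m.im^2))/Complex.normSq (1 - Complex.I*m) := by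
      rw [Complex.div_im]
      simp only [Complex.sub_re, Complex.sub_im, Complex.mul_re, Complex.mul_im,
        Complex.I_re, Complex.I_im, Complex.one_re, Complex.one_im]
      ring
    rw [e]
    exact div_pos (by linarith) hpos
  have hzne : z ≠ 0 := by
    intro h0
    rw [h0] at hzim
    simp at hzim
  have hargpos : 0 < Complex.arg z := by
    rcases lt_or_eq_of_le (Complex.arg_nonneg_iff.mpr hzim.le) with h | h
    · exact h
    · exact absurd (Complex.arg_eq_zero_iff.mp h.symm).2 (by linarith)
  have harglt : Complex.arg z < Real.pi := by
    rcases lt_or_eq_of_le (Complex.arg_le_pi z) with h | h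
    · exact h
    · exact absurd (Complex.arg_eq_pi_iff.mp h).2 (by linarith)
  have hlog2pi : log2pi z = Complex.log z := by
    rw [log2pi, if_neg (not_lt.mpr hargpos.le)]
    rfl
  -- the branch computation
  have hqinv : Complex.exp (-(θ₀:ℂ) * Complex.I) = q⁻¹ := by
    rw [hqexp, ← Complex.exp_neg]
    congr 1
    ring
  have hexpz : Complex.exp (Complex.log A - Complex.log B + (θ₀:ℂ) * Complex.I) = z := by
    rw [Complex.exp_add, Complex.exp_sub, Complex.exp_log hAne, Complex.exp_log hBne,
      hzdef, hA, hB, hqinv, ← hqexp]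
    have hBne' : (1:ℂ) - v * q ≠ 0 := by
      rw [mul_comm]
      exact hqv
    field_simp
  have hlogz : Complex.log z = Complex.log A - Complex.log B + (θ₀:ℂ) * Complex.I := by
    have h1 : Complex.exp ((Complex.log A - Complex.log B + (θ₀:ℂ) * Complex.I)
        - Complex.log z) = 1 := by
      rw [Complex.exp_sub, hexpz, Complex.exp_log hzne, div_self hzne]
    obtain ⟨n, hn⟩ := Complex.exp_eq_one_iff.mp h1
    have him := congrArg Complex.im hn
    simp only [Complex.sub_im, Complex.add_im, Complex.log_im, Complex.mul_im,
      Complex.ofReal_re, Complex.ofReal_im, Complex.I_re, Complex.I_im, Complex.intCast_im,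
      Complex.intCast_re, mul_zero, mul_one, zero_mul, add_zero, zero_add,
      Complex.mul_re, Complex.re_ofNat, Complex.im_ofNat, Complex.ofReal_mul] at him
    -- him : arg A - arg B + θ₀ - arg z = n * (2 * π)
    have hπ := Real.pi_pos
    have habsA := abs_lt.mp hAarg
    have habsB := abs_lt.mp hBarg
    have hn1 : (n:ℝ) < 1 := by nlinarith
    have hn2 : (-1 : ℝ) < (n:ℝ) := by nlinarith
    have hn0 : n = 0 := by
      have h1' : n < 1 := by exact_mod_cast hn1
      have h2' : -1 < n := by exact_mod_cast hn2
      omega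
    rw [hn0] at hn
    simp only [Int.cast_zero, zero_mul] at hn
    linear_combination -hn
  -- final assembly
  simp only [tau]
  rw [hzeq, hlog2pi, hlogz]
  have hπ : (Real.pi : ℂ) ≠ 0 := Complex.ofReal_ne_zero.mpr Real.pi_ne_zero
  push_cast
  field_simp
  linear_combination (2*(θ₀:ℂ)) * Complex.I_sq
end

section
/- Let D ⊂ ℂⁿ be a taut convex tube domain, let φ : 𝔻 → D be a complex geodesic with holomorphic left inverse f : D → 𝔻 (f ∘ φ = id_𝔻), and let h(λ) = (∂f/∂z₁(φ(λ)),…,∂f/∂zₙ(φ(λ))) for λ ∈ 𝔻. Then for all λ ∈ 𝔻 and all z ∈ D: Re[λ̄h(λ) • (z − φ(λ))] ≤ 2(1 − |λ|) |h(0) • (z − φ(0))|. -/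
open MeasureTheory Complex Metric Set Filter ComplexConjugate

lemma clm_sum_single {n : ℕ} (L : (Fin n → ℂ) →L[ℂ] ℂ) (w : Fin n → ℂ) :
    ∑ j, L (Pi.single j 1) * w j = L w := by
  have hw : w = ∑ j, w j • (Pi.single j 1 : Fin n → ℂ) := by
    funext i
    simp [Finset.sum_apply, Pi.single_apply, mul_ite, Finset.sum_ite_eq]
  conv_rhs => rw [hw]
  rw [map_sum]
  exact Finset.sum_congr rfl fun j _ => by rw [ContinuousLinearMap.map_smul, smul_eq_mul, mul_comm]

lemma hasDerivAt_normSq_comp {c : ℝ → ℂ} {c' : ℂ} {t : ℝ} (h : HasDerivAt c c' t) :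
    HasDerivAt (fun s => Complex.normSq (c s))
      (2 * ((c t).re * c'.re + (c t).im * c'.im)) t := by
  have hre : HasDerivAt (fun s => (c s).re) c'.re t :=
    Complex.reCLM.hasFDerivAt.comp_hasDerivAt t h
  have him : HasDerivAt (fun s => (c s).im) c'.im t :=
    Complex.imCLM.hasFDerivAt.comp_hasDerivAt t h
  have h2 := (hre.mul hre).add (him.mul him)
  have hfun : (fun s => Complex.normSq (c s))
      = fun s => (c s).re * (c s).re + (c s).im * (c s).im := by
    funext s; exact Complex.normSq_apply _
  rw [hfun]
  exact h2.congr_deriv (by ring)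

lemma slope_deriv_nonneg {B : ℝ → ℝ} {d : ℝ} (hB : HasDerivAt B d 0) (h0 : B 0 = 0)
    (hpos : ∀ t ∈ Ioo (0:ℝ) 1, 0 ≤ B t) : 0 ≤ d := by
  have h := hasDerivAt_iff_tendsto_slope.1 hB
  have h' : Tendsto (slope B 0) (nhdsWithin 0 (Ioi 0)) (nhds d) :=
    h.mono_left (nhdsWithin_mono _ (fun x hx => ne_of_gt hx))
  refine ge_of_tendsto h' ?_
  filter_upwards [Ioo_mem_nhdsGT_of_mem (show (0:ℝ) ∈ Ico (0:ℝ) 1 from ⟨le_refl 0, one_pos⟩)]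
    with t ht
  rw [slope_def_field]
  rw [h0, sub_zero, sub_zero]
  exact div_nonneg (hpos t ht) ht.1.le

lemma schwarz_pick {g : ℂ → ℂ} (hd : DifferentiableOn ℂ g (ball 0 1))
    (hm : MapsTo g (ball 0 1) (ball 0 1)) {w : ℂ} (hw : w ∈ ball 0 1) :
    ‖g w - g 0‖ ≤ ‖w‖ * ‖1 - conj (g 0) * g w‖ := by
  have h0 : (0:ℂ) ∈ ball (0:ℂ) 1 := mem_ball_self one_pos
  set a := g 0 with ha
  have ha1 : ‖a‖ < 1 := by
    simpa using mem_ball_zero_iff.1 (hm h0)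
  have hna : Complex.normSq a < 1 := by
    have := Complex.sq_norm a; nlinarith [norm_nonneg a]
  have key : ∀ x : ℂ, ‖x‖ < 1 →
      1 - conj a * x ≠ 0 ∧ ‖x - a‖ < ‖1 - conj a * x‖ := by
    intro x hx
    have hnx : Complex.normSq x < 1 := by
      have := Complex.sq_norm x; nlinarith [norm_nonneg x]
    have hid : Complex.normSq (1 - conj a * x) - Complex.normSq (x - a)
        = (1 - Complex.normSq a) * (1 - Complex.normSq x) := by
      simp only [Complex.normSq_apply, Complex.sub_re, Complex.sub_im, Complex.mul_re,
        Complex.mul_im, Complex.one_re, Complex.one_im, Complex.conj_re, Complex.conj_im]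
      ring
    have hgt : Complex.normSq (x - a) < Complex.normSq (1 - conj a * x) := by nlinarith
    have hne : 1 - conj a * x ≠ 0 := by
      intro h
      rw [h] at hgt
      simp only [map_zero] at hgt
      exact absurd hgt (not_lt.2 (Complex.normSq_nonneg _))
    refine ⟨hne, ?_⟩
    rw [Complex.norm_def, Complex.norm_def]
    exact Real.sqrt_lt_sqrt (Complex.normSq_nonneg _) hgt
  set F : ℂ → ℂ := fun u => (g u - a) / (1 - conj a * g u) with hF
  have hgx : ∀ u ∈ ball (0:ℂ) 1, ‖g u‖ < 1 := fun u hu => by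
    simpa using mem_ball_zero_iff.1 (hm hu)
  have hFd : DifferentiableOn ℂ F (ball 0 1) :=
    (hd.sub (differentiableOn_const a)).div
      ((differentiableOn_const 1).sub ((differentiableOn_const (conj a)).mul hd))
      (fun u hu => (key _ (hgx u hu)).1)
  have hFm : MapsTo F (ball 0 1) (ball 0 1) := by
    intro u hu
    obtain ⟨hne, hlt⟩ := key _ (hgx u hu)
    rw [mem_ball_zero_iff]
    simp only [hF, norm_div]
    rw [div_lt_one (norm_pos_iff.2 hne)]
    exact hlt
  have hF0 : F 0 = 0 := by simp [hF, ← ha]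
  have habs := Complex.norm_le_norm_of_mapsTo_ball hFd (hFm.mono_right ball_subset_closedBall) hF0
    (show ‖w‖ < 1 by simpa using mem_ball_zero_iff.1 hw)
  obtain ⟨hne, _⟩ := key _ (hgx w hw)
  have : ‖g w - a‖ / ‖1 - conj a * g w‖ ≤ ‖w‖ := by
    simpa [hF, norm_div] using habs
  rw [div_le_iff₀ (norm_pos_iff.2 hne)] at this
  linarith [this]


set_option maxHeartbeats 1000000 in
/-- The key inequality from the proof of the necessity proposition:
`Re[λ̄h(λ) • (z − φ(λ))] ≤ 2(1 − |λ|)|h(0) • (z − φ(0))|` for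
`h(λ) = (∂f/∂z₁(φ(λ)),…,∂f/∂zₙ(φ(λ)))`, `f` a holomorphic left inverse of `φ`. -/
theorem geodesic_derivative_inequality {n : ℕ}
    (D : Set (Fin n → ℂ)) (Ω : Set (Fin n → ℝ))
    (hTube : IsConvexTube D Ω) (hTaut : NoLine Ω)
    (φ : ℂ → Fin n → ℂ) (hφ : DifferentiableOn ℂ φ (ball 0 1))
    (hφD : MapsTo φ (ball 0 1) D)
    (f : (Fin n → ℂ) → ℂ) (hf : DifferentiableOn ℂ f D)
    (hfD : MapsTo f D (ball 0 1))
    (hleft : ∀ lam ∈ ball (0 : ℂ) 1, f (φ lam) = lam) :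
    ∀ lam ∈ ball (0 : ℂ) 1, ∀ z ∈ D,
      (∑ j, conj lam * fderiv ℂ f (φ lam) (Pi.single j 1) * (z j - φ lam j)).re ≤
        2 * (1 - ‖lam‖) *
          ‖∑ j, fderiv ℂ f (φ 0) (Pi.single j 1) * (z j - φ 0 j)‖ := by
  intro lam hlam z hz
  obtain ⟨hΩconv, hΩopen, -, hD⟩ := hTube
  have hproj : Continuous fun v : Fin n → ℂ => fun j => (v j).re :=
    continuous_pi fun j => Complex.continuous_re.comp (continuous_apply j)
  have hDopen : IsOpen D := by rw [hD]; exact hΩopen.preimage hproj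
  have hDconv : Convex ℝ D := by
    rw [hD]
    intro x hx y hy s t hs ht hst
    have hmem := hΩconv hx hy hs ht hst
    have heq : (fun j => ((s • x + t • y) j).re)
        = s • (fun j => (x j).re) + t • (fun j => (y j).re) := by
      funext j
      simp [Complex.add_re, Complex.smul_re, smul_eq_mul]
    show (fun j => ((s • x + t • y) j).re) ∈ Ω
    rw [heq]; exact hmem
  have hseg : ∀ w ∈ D, ∀ t : ℝ, t ∈ Icc (0:ℝ) 1 → w + (t:ℂ) • (z - w) ∈ D := by
    intro w hw t ht
    have h1 : w + t • (z - w) ∈ D := hDconv.add_smul_sub_mem hw hz ht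
    have hsm : (t:ℂ) • (z - w) = t • (z - w) := by
      funext j; simp [Complex.real_smul]
    rw [hsm]; exact h1
  have h0ball : (0:ℂ) ∈ ball (0:ℂ) 1 := mem_ball_self one_pos
  have hφlam := hφD hlam
  have hφ0 := hφD h0ball
  have hfl : DifferentiableAt ℂ f (φ lam) := hf.differentiableAt (hDopen.mem_nhds hφlam)
  have hf0 : DifferentiableAt ℂ f (φ 0) := hf.differentiableAt (hDopen.mem_nhds hφ0)
  set L1 := fderiv ℂ f (φ lam) with hL1
  set L0 := fderiv ℂ f (φ 0) with hL0
  set u1 := L1 (z - φ lam) with hu1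
  set u0 := L0 (z - φ 0) with hu0
  have hg1 : ∑ j, conj lam * L1 (Pi.single j 1) * (z j - φ lam j) = conj lam * u1 := by
    rw [hu1, ← clm_sum_single L1 (z - φ lam), Finset.mul_sum]
    exact Finset.sum_congr rfl fun j _ => by rw [Pi.sub_apply, mul_assoc]
  have hg0 : ∑ j, L0 (Pi.single j 1) * (z j - φ 0 j) = u0 := by
    rw [hu0, ← clm_sum_single L0 (z - φ 0)]
    exact Finset.sum_congr rfl fun j _ => rfl
  rw [hg1, hg0]
  rcases eq_or_ne lam 0 with rfl | hlam0
  · simp only [map_zero, zero_mul, Complex.zero_re, norm_zero]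
    positivity
  set s := ‖lam‖ with hsDef
  have hs1 : s < 1 := by simpa using mem_ball_zero_iff.1 hlam
  have hs0 : 0 < s := norm_pos_iff.2 hlam0
  -- curves
  set a : ℝ → ℂ := fun t => f (φ 0 + (t:ℂ) • (z - φ 0)) with haDef
  set b : ℝ → ℂ := fun t => f (φ lam + (t:ℂ) • (z - φ lam)) with hbDef
  have ha0 : a 0 = 0 := by
    simp only [haDef, Complex.ofReal_zero, zero_smul, add_zero]
    exact hleft 0 h0ball
  have hb0 : b 0 = lam := by
    simp only [hbDef, Complex.ofReal_zero, zero_smul, add_zero]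
    exact hleft lam hlam
  have hpath : ∀ w v : Fin n → ℂ, HasDerivAt (fun t : ℝ => w + (t:ℂ) • v) v 0 := by
    intro w v
    have h1 : HasDerivAt (fun t : ℝ => (t:ℂ)) 1 0 := Complex.ofRealCLM.hasDerivAt
    have h2 := h1.smul_const v
    simpa using h2.const_add w
  have hderiv : ∀ w, w ∈ D → DifferentiableAt ℂ f w →
      HasDerivAt (fun t : ℝ => f (w + (t:ℂ) • (z - w))) (fderiv ℂ f w (z - w)) 0 := by
    intro w hw hfw
    have hF : HasFDerivAt f ((fderiv ℂ f w).restrictScalars ℝ) w :=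
      hfw.hasFDerivAt.restrictScalars ℝ
    have hcomp : HasDerivAt (f ∘ fun t : ℝ => w + (t:ℂ) • (z - w))
        ((fderiv ℂ f w).restrictScalars ℝ (z - w)) 0 := by
      apply HasFDerivAt.comp_hasDerivAt _ _ (hpath w (z - w))
      simpa using hF
    exact hcomp
  have had : HasDerivAt a u0 0 := hderiv (φ 0) hφ0 hf0
  have hbd : HasDerivAt b u1 0 := hderiv (φ lam) hφlam hfl
  have hcad : HasDerivAt (fun t => conj (a t)) (conj u0) 0 := by
    have h := Complex.conjCLE.hasFDerivAt.comp_hasDerivAt 0 had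
    exact h
  set c : ℝ → ℂ := fun t => 1 - conj (a t) * b t with hcDef
  have hc0 : c 0 = 1 := by simp [hcDef, ha0]
  have hcd : HasDerivAt c (-(conj u0 * lam)) 0 := by
    have h := (hcad.mul hbd).const_sub 1
    simpa [ha0, hb0] using h
  set B : ℝ → ℝ := fun t => Complex.normSq lam * Complex.normSq (c t)
      - Complex.normSq (b t - a t) with hBDef
  have hBd : HasDerivAt B
      (Complex.normSq lam * (2 * ((c 0).re * (-(conj u0 * lam)).re
          + (c 0).im * (-(conj u0 * lam)).im))
        - 2 * ((b 0 - a 0).re * (u1 - u0).re + (b 0 - a 0).im * (u1 - u0).im)) 0 :=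
    ((hasDerivAt_normSq_comp hcd).const_mul _).sub (hasDerivAt_normSq_comp (hbd.sub had))
  have hB0 : B 0 = 0 := by
    simp [hBDef, hc0, hb0, ha0]
  have hBpos : ∀ t ∈ Ioo (0:ℝ) 1, 0 ≤ B t := by
    intro t ht
    set g : ℂ → ℂ := fun w => f (φ w + (t:ℂ) • (z - φ w)) with hgDef
    have hmapsD : MapsTo (fun w => φ w + (t:ℂ) • (z - φ w)) (ball 0 1) D :=
      fun w hw => hseg (φ w) (hφD hw) t ⟨ht.1.le, ht.2.le⟩
    have hgd : DifferentiableOn ℂ g (ball 0 1) :=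
      hf.comp (hφ.add (((differentiableOn_const z).sub hφ).const_smul ((t:ℂ)))) hmapsD
    have hgm : MapsTo g (ball 0 1) (ball 0 1) := fun w hw => hfD (hmapsD hw)
    have hsp := schwarz_pick hgd hgm hlam
    have hga : g 0 = a t := by
      simp only [hgDef, haDef]
    have hgb : g lam = b t := by
      simp only [hgDef, hbDef]
    rw [hga, hgb] at hsp
    have habc : ‖b t - a t‖ ≤ s * ‖c t‖ := hsp
    have n1 := norm_nonneg (b t - a t)
    have key : ‖b t - a t‖ ^ 2 ≤ (s * ‖c t‖) ^ 2 :=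
      pow_le_pow_left₀ n1 habc 2
    simp only [hBDef]
    rw [← Complex.sq_norm (b t - a t), ← Complex.sq_norm lam, ← Complex.sq_norm (c t)]
    nlinarith [key]
  have hd0 := slope_deriv_nonneg hBd hB0 hBpos
  -- unfold the derivative value
  have e1 : b 0 - a 0 = lam := by rw [hb0, ha0, sub_zero]
  rw [hc0, e1] at hd0
  have k1 : lam.re * (u1 - u0).re + lam.im * (u1 - u0).im
      = (conj lam * u1).re - (conj lam * u0).re := by
    simp only [Complex.mul_re, Complex.conj_re, Complex.conj_im, Complex.sub_re,
      Complex.sub_im]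
    ring
  have k2 : (1:ℂ).re * (-(conj u0 * lam)).re + (1:ℂ).im * (-(conj u0 * lam)).im
      = -((conj lam * u0).re) := by
    simp only [Complex.one_re, Complex.one_im, Complex.neg_re, Complex.neg_im,
      Complex.mul_re, Complex.mul_im, Complex.conj_re, Complex.conj_im]
    ring
  rw [k2] at hd0
  rw [show lam.re * (u1 - u0).re + lam.im * (u1 - u0).im
      = (conj lam * u1).re - (conj lam * u0).re from k1] at hd0
  -- final algebra
  have hre : (conj lam * u0).re ≤ s * ‖u0‖ := by
    calc (conj lam * u0).re ≤ ‖conj lam * u0‖ := Complex.re_le_norm _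
      _ = s * ‖u0‖ := by rw [norm_mul, Complex.norm_conj]
  have hA : 0 ≤ ‖u0‖ := norm_nonneg u0
  have hns : Complex.normSq lam = s ^ 2 := (Complex.sq_norm lam).symm
  rw [hns] at hd0
  have h1s : (0:ℝ) ≤ 1 - s := by linarith
  have h2 : (conj lam * u1).re ≤ (1 - s ^ 2) * (conj lam * u0).re := by nlinarith [hd0]
  have h1 : (1 - s ^ 2) * (conj lam * u0).re ≤ (1 - s ^ 2) * (s * ‖u0‖) :=
    mul_le_mul_of_nonneg_left hre (by nlinarith)
  have h3 : (1 - s ^ 2) * (s * ‖u0‖) ≤ 2 * (1 - s) * ‖u0‖ := by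
    nlinarith [mul_nonneg (mul_nonneg hA h1s) (show (0:ℝ) ≤ 2 - s - s ^ 2 by nlinarith)]
  linarith
end
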